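/- A uniform-block matrix N(A,B,ℓ) with A = diag(a_1,...,a_G), B symmetric, and L = diag(L_1,...,L_G) is positive definite if and only if a_g > 0 for all g with L_g ≥ 2 and the G×G matrix Δ = A + B L has all eigenvalues positive (equivalently, L^{1/2}(A+BL)L^{-1/2} symmetrized is positive definite). -/

import Mathlib

open Matrix BigOperators Polynomial

/-- The uniform-block matrix `N(A, B, ℓ) = A ∘ I(ℓ) + B ∘ J(ℓ)`. -/
def UB (G : ℕ) (L : Fin G → ℕ) (a : Fin G → ℝ) (B : Matrix (Fin G) (Fin G) ℝ) :
    Matrix ((g : Fin G) × Fin (L g)) ((g : Fin G) × Fin (L g)) ℝ :=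
  Matrix.of fun i j => (if i = j then a i.1 else 0) + B i.1 j.1

lemma eval_charpoly' {n R : Type*} [Fintype n] [DecidableEq n] [CommRing R]
    (M : Matrix n n R) (μ : R) :
    M.charpoly.eval μ = (Matrix.diagonal (fun _ => μ) - M).det := by
  have : M.charpoly.eval μ = (Polynomial.evalRingHom μ) M.charpoly := rfl
  rw [this, Matrix.charpoly, RingHom.map_det]
  congr 1
  ext i j
  by_cases h : i = j <;>
    simp [Matrix.charmatrix_apply, h, Matrix.diagonal_apply, Matrix.map_apply]

lemma posDef_conj' {n : Type*} [Fintype n] [DecidableEq n] {M : Matrix n n ℝ}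
    (P : Matrix n n ℝ) (hM : M.PosDef) (hP : IsUnit P) : (Pᴴ * M * P).PosDef := by
  refine Matrix.PosDef.of_dotProduct_mulVec_pos (Matrix.isHermitian_conjTranspose_mul_mul P hM.1) fun x hx => ?_
  have hinj : Function.Injective (P.mulVec) := Matrix.mulVec_injective_iff_isUnit.mpr hP
  have hPx : P *ᵥ x ≠ 0 := fun h => hx (hinj (by simpa using h))
  have h2 := hM.dotProduct_mulVec_pos hPx
  have key : star x ⬝ᵥ ((Pᴴ * M * P) *ᵥ x) = star (P *ᵥ x) ⬝ᵥ (M *ᵥ (P *ᵥ x)) := by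
    rw [Matrix.star_mulVec, ← Matrix.mulVec_mulVec, ← Matrix.mulVec_mulVec,
      Matrix.dotProduct_mulVec]
  rwa [key]

lemma quad_single_sub {n : Type*} [Fintype n] [DecidableEq n] (M : Matrix n n ℝ) (p q : n)
    (hpq : p ≠ q) :
    (Pi.single p 1 - Pi.single q 1) ⬝ᵥ (M *ᵥ (Pi.single p 1 - Pi.single q 1))
      = M p p - M p q - M q p + M q q := by
  simp [dotProduct, mulVec, sub_mul, mul_sub, Finset.sum_sub_distrib, Pi.single_apply,
    ite_mul, mul_ite, Finset.sum_ite_eq, Finset.sum_ite_eq', hpq]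
  ring

lemma UB_quad (G : ℕ) (L : Fin G → ℕ) (a : Fin G → ℝ) (B : Matrix (Fin G) (Fin G) ℝ)
    (x : ((g : Fin G) × Fin (L g)) → ℝ) :
    x ⬝ᵥ (UB G L a B *ᵥ x)
      = (∑ g, a g * ∑ k, x ⟨g, k⟩ ^ 2)
        + (fun g => ∑ k, x ⟨g, k⟩) ⬝ᵥ (B *ᵥ fun g => ∑ k, x ⟨g, k⟩) := by
  classical
  have hmv : ∀ i, (UB G L a B *ᵥ x) i = a i.1 * x i + ∑ h, B i.1 h * ∑ k, x ⟨h, k⟩ := by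
    intro i
    simp only [mulVec, dotProduct, UB, Matrix.of_apply, add_mul, Finset.sum_add_distrib,
      ite_mul, zero_mul]
    congr 1
    · simp [Finset.sum_ite_eq]
    · rw [← Finset.univ_sigma_univ, Finset.sum_sigma]
      simp [Finset.mul_sum]
  simp only [dotProduct, hmv]
  rw [← Finset.univ_sigma_univ, Finset.sum_sigma]
  simp only [mul_add, Finset.sum_add_distrib]
  congr 1
  · congr 1; ext g; rw [Finset.mul_sum]; congr 1; ext k; ring
  · congr 1; ext g
    rw [← Finset.sum_mul]; simp [mulVec, dotProduct]

lemma UB_isHermitian (G : ℕ) (L : Fin G → ℕ) (a : Fin G → ℝ) (B : Matrix (Fin G) (Fin G) ℝ)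
    (hB : B.IsSymm) : (UB G L a B).IsHermitian := by
  ext i j
  simp only [conjTranspose_apply, UB, Matrix.of_apply, star_trivial]
  rw [← hB.apply i.1 j.1]
  by_cases h : i = j
  · simp [h]
  · simp [h, Ne.symm h, star_trivial]

lemma Smat_isHermitian (G : ℕ) (L : Fin G → ℕ) (a : Fin G → ℝ) (B : Matrix (Fin G) (Fin G) ℝ)
    (hB : B.IsSymm) :
    (Matrix.diagonal (fun g => a g / (L g : ℝ)) + B).IsHermitian := by
  ext i j
  simp only [conjTranspose_apply, Matrix.add_apply, diagonal_apply, star_trivial]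
  rw [← hB.apply i j]
  by_cases h : i = j <;> simp [h, Ne.symm, eq_comm]

lemma det_sub_eigen (G : ℕ) (T : Matrix (Fin G) (Fin G) ℝ) (hT : T.IsHermitian) (μ : ℂ) :
    (Matrix.diagonal (fun _ : Fin G => μ) - T.map (algebraMap ℝ ℂ)).det
      = ∏ i, (μ - (hT.eigenvalues i : ℂ)) := by
  classical
  set f := algebraMap ℝ ℂ
  have hspec := hT.spectral_theorem
  set U : Matrix (Fin G) (Fin G) ℝ := (hT.eigenvectorUnitary : Matrix (Fin G) (Fin G) ℝ)
    with hU
  set V := U.map f with hV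
  set W := (star U).map f with hW
  have hUU : U * star U = 1 := Matrix.mem_unitaryGroup_iff.mp hT.eigenvectorUnitary.2
  have hVW : V * W = 1 := by
    rw [hV, hW, ← Matrix.map_mul, hUU, Matrix.map_one f (map_zero f) (map_one f)]
  have hTmap : T.map f = V * Matrix.diagonal (fun i => (hT.eigenvalues i : ℂ)) * W := by
    conv_lhs => rw [hspec, Unitary.conjStarAlgAut_apply]
    have hd : (Matrix.diagonal (RCLike.ofReal ∘ hT.eigenvalues)).map f
        = Matrix.diagonal (fun i => (hT.eigenvalues i : ℂ)) := by
      rw [Matrix.diagonal_map (map_zero f)]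
      congr 1
    rw [Matrix.map_mul, Matrix.map_mul, hd]
  have hdiagμ : Matrix.diagonal (fun _ : Fin G => μ) = μ • (1 : Matrix (Fin G) (Fin G) ℂ) := by
    ext i j
    by_cases h : i = j <;> simp [h, Matrix.one_apply, Matrix.diagonal_apply]
  have hkey : Matrix.diagonal (fun _ : Fin G => μ) - T.map f
      = V * (Matrix.diagonal (fun _ : Fin G => μ)
          - Matrix.diagonal (fun i => (hT.eigenvalues i : ℂ))) * W := by
    rw [Matrix.mul_sub, Matrix.sub_mul, hTmap]
    congr 1
    rw [hdiagμ, mul_smul_comm, smul_mul_assoc, mul_one, hVW]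
  rw [hkey, det_mul, det_mul]
  have h1 : V.det * W.det = 1 := by rw [← det_mul, hVW, det_one]
  have h2 : (Matrix.diagonal (fun _ : Fin G => μ)
      - Matrix.diagonal (fun i => (hT.eigenvalues i : ℂ))).det
      = ∏ i, (μ - (hT.eigenvalues i : ℂ)) := by
    rw [Matrix.diagonal_sub, det_diagonal]
  calc V.det * (Matrix.diagonal (fun _ : Fin G => μ)
      - Matrix.diagonal (fun i => (hT.eigenvalues i : ℂ))).det * W.det
      = (Matrix.diagonal (fun _ : Fin G => μ)
      - Matrix.diagonal (fun i => (hT.eigenvalues i : ℂ))).det * (V.det * W.det) := by ring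
    _ = ∏ i, (μ - (hT.eigenvalues i : ℂ)) := by rw [h1, h2, mul_one]

theorem main1 (G : ℕ) (L : Fin G → ℕ) (hL : ∀ g, 0 < L g)
    (a : Fin G → ℝ) (B : Matrix (Fin G) (Fin G) ℝ) (hB : B.IsSymm) :
    (UB G L a B).PosDef ↔
      (∀ g, 2 ≤ L g → 0 < a g) ∧
      (Matrix.diagonal (fun g => a g / (L g : ℝ)) + B).PosDef := by
  classical
  set S := Matrix.diagonal (fun g => a g / (L g : ℝ)) + B with hS
  constructor
  · intro hUBpd
    obtain ⟨hherm, hpos⟩ := Matrix.posDef_iff_dotProduct_mulVec.mp hUBpd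
    constructor
    · intro g hg
      obtain ⟨k0, k1, hk01⟩ : ∃ k0 k1 : Fin (L g), k0 ≠ k1 :=
        ⟨⟨0, by omega⟩, ⟨1, by omega⟩, by simp [Fin.ext_iff]⟩
      have hpq : (⟨g, k0⟩ : (g' : Fin G) × Fin (L g')) ≠ ⟨g, k1⟩ := by
        simp [Sigma.mk.inj_iff, hk01]
      have hx : (Pi.single ⟨g, k0⟩ 1 - Pi.single ⟨g, k1⟩ 1 :
          ((g' : Fin G) × Fin (L g')) → ℝ) ≠ 0 := by
        intro h
        have := congrFun h ⟨g, k0⟩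
        simp [Pi.single_apply, hpq] at this
      have := hpos hx
      rw [star_trivial, quad_single_sub _ _ _ hpq] at this
      have e11 : UB G L a B ⟨g, k0⟩ ⟨g, k0⟩ = a g + B g g := by simp [UB]
      have e22 : UB G L a B ⟨g, k1⟩ ⟨g, k1⟩ = a g + B g g := by simp [UB]
      have e12 : UB G L a B ⟨g, k0⟩ ⟨g, k1⟩ = B g g := by
        simp [UB, Sigma.mk.inj_iff, hk01]
      have e21 : UB G L a B ⟨g, k1⟩ ⟨g, k0⟩ = B g g := by
        simp [UB, Sigma.mk.inj_iff, hk01.symm]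
      rw [e11, e22, e12, e21] at this
      linarith
    · refine Matrix.PosDef.of_dotProduct_mulVec_pos (Smat_isHermitian G L a B hB) fun v hv => ?_
      set x : ((g : Fin G) × Fin (L g)) → ℝ := fun i => v i.1 / (L i.1 : ℝ) with hxdef
      have hx : x ≠ 0 := by
        intro h
        obtain ⟨g, hg⟩ := Function.ne_iff.mp hv
        have := congrFun h ⟨g, ⟨0, hL g⟩⟩
        simp only [hxdef, Pi.zero_apply] at this
        have hLg : (L g : ℝ) ≠ 0 := Nat.cast_ne_zero.mpr (hL g).ne'
        rcases div_eq_zero_iff.mp this with h | h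
        · exact hg h
        · exact absurd h hLg
      have hsum : ∀ g, (∑ k : Fin (L g), x ⟨g, k⟩) = v g := by
        intro g
        have hLg : (L g : ℝ) ≠ 0 := Nat.cast_ne_zero.mpr (hL g).ne'
        simp only [hxdef, Finset.sum_const, Finset.card_univ, Fintype.card_fin, nsmul_eq_mul]
        field_simp
      have hsq : ∀ g, (∑ k : Fin (L g), x ⟨g, k⟩ ^ 2) = v g ^ 2 / (L g : ℝ) := by
        intro g
        simp only [hxdef, Finset.sum_const, Finset.card_univ, Fintype.card_fin, nsmul_eq_mul]
        have hLg : (L g : ℝ) ≠ 0 := Nat.cast_ne_zero.mpr (hL g).ne'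
        field_simp
      have := hpos hx
      rw [star_trivial, UB_quad] at this
      simp only [hsum, hsq] at this
      rw [star_trivial]
      have hexp : v ⬝ᵥ (S *ᵥ v)
          = (∑ g, a g * (v g ^ 2 / (L g : ℝ))) + v ⬝ᵥ (B *ᵥ v) := by
        simp only [hS, add_mulVec, dotProduct_add, diagonal_mulVec_single]
        congr 1
        simp only [mulVec_diagonal, dotProduct]
        apply Finset.sum_congr rfl; intro g _; ring
      rw [hexp]
      convert this using 2
  · rintro ⟨ha, hSpd⟩
    refine Matrix.PosDef.of_dotProduct_mulVec_pos (UB_isHermitian G L a B hB) fun x hx => ?_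
    rw [star_trivial, UB_quad]
    set s : Fin G → ℝ := fun g => ∑ k, x ⟨g, k⟩ with hsdef
    have hterm : ∀ g, a g * (∑ k : Fin (L g), x ⟨g, k⟩ ^ 2)
        = a g * ((∑ k : Fin (L g), x ⟨g, k⟩ ^ 2) - s g ^ 2 / (L g : ℝ))
          + a g / (L g : ℝ) * s g ^ 2 := by
      intro g
      have hLg : (L g : ℝ) ≠ 0 := Nat.cast_ne_zero.mpr (hL g).ne'
      field_simp
      ring
    have hqs : s ⬝ᵥ (S *ᵥ s) = (∑ g, a g / (L g : ℝ) * s g ^ 2) + s ⬝ᵥ (B *ᵥ s) := by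
      simp only [hS, add_mulVec, dotProduct_add]
      congr 1
      simp only [mulVec_diagonal, dotProduct]
      apply Finset.sum_congr rfl; intro g _; ring
    have split : (∑ g, a g * ∑ k, x ⟨g, k⟩ ^ 2) + s ⬝ᵥ (B *ᵥ s)
        = (∑ g, a g * ((∑ k : Fin (L g), x ⟨g, k⟩ ^ 2) - s g ^ 2 / (L g : ℝ)))
          + s ⬝ᵥ (S *ᵥ s) := by
      rw [hqs]
      rw [Finset.sum_congr rfl (fun g _ => hterm g), Finset.sum_add_distrib]
      ring
    rw [split]
    -- nonnegativity of each correction term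
    have hnonneg : ∀ g, 0 ≤ a g * ((∑ k : Fin (L g), x ⟨g, k⟩ ^ 2) - s g ^ 2 / (L g : ℝ)) := by
      intro g
      have hLg : (0:ℝ) < (L g : ℝ) := Nat.cast_pos.mpr (hL g)
      have hCS : s g ^ 2 ≤ (L g : ℝ) * ∑ k : Fin (L g), x ⟨g, k⟩ ^ 2 := by
        have := sq_sum_le_card_mul_sum_sq (s := (Finset.univ : Finset (Fin (L g))))
          (f := fun k => x ⟨g, k⟩)
        simpa [hsdef, Finset.card_univ] using this
      have hge : 0 ≤ (∑ k : Fin (L g), x ⟨g, k⟩ ^ 2) - s g ^ 2 / (L g : ℝ) := by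
        rw [sub_nonneg, div_le_iff₀ hLg]
        linarith
      rcases Nat.lt_or_ge (L g) 2 with h1 | h2
      · -- L g = 1 : the correction is exactly zero
        have hL1 : L g = 1 := by have := hL g; omega
        haveI : Subsingleton (Fin (L g)) :=
          Fintype.card_le_one_iff_subsingleton.mp (by simp [hL1])
        have k0 : Fin (L g) := ⟨0, hL g⟩
        have e1 : (∑ k : Fin (L g), x ⟨g, k⟩ ^ 2) = x ⟨g, k0⟩ ^ 2 :=
          Fintype.sum_subsingleton _ k0
        have e2 : s g = x ⟨g, k0⟩ := Fintype.sum_subsingleton _ k0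
        rw [e1, e2, hL1]
        simp
      · exact mul_nonneg (ha g h2).le hge
    by_cases hs : s = 0
    · -- then quadratic part vanishes; find a strictly positive correction term
      rw [hs]
      simp only [Matrix.mulVec_zero, dotProduct_zero, add_zero]
      obtain ⟨i, hi⟩ := Function.ne_iff.mp hx
      set g := i.1
      have h2 : 2 ≤ L g := by
        by_contra h1
        have hL1 : L g = 1 := by have := hL g; omega
        haveI : Subsingleton (Fin (L g)) :=
          Fintype.card_le_one_iff_subsingleton.mp (by simp [hL1])
        have e2 : s g = x ⟨g, i.2⟩ := Fintype.sum_subsingleton _ i.2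
        rw [hs] at e2
        exact hi (by simpa using e2.symm)
      refine Finset.sum_pos' (fun g' _ => ?_) ⟨g, Finset.mem_univ g, ?_⟩
      · have := hnonneg g'
        rw [hs] at this
        simpa using this
      · have hpos' : 0 < ∑ k : Fin (L g), x ⟨g, k⟩ ^ 2 := by
          refine Finset.sum_pos' (fun k _ => sq_nonneg _) ⟨i.2, Finset.mem_univ _, ?_⟩
          have : x ⟨g, i.2⟩ ≠ 0 := by
            exact hi
          positivity
        have hsg : s g = 0 := by rw [hs]; rfl
        have : (0:ℝ) < a g := ha g h2
        calc (0:ℝ) < a g * ∑ k : Fin (L g), x ⟨g, k⟩ ^ 2 := by positivity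
        _ = a g * ((∑ k : Fin (L g), x ⟨g, k⟩ ^ 2) - (0:ℝ) ^ 2 / (L g : ℝ)) := by simp
    · have h1 : 0 ≤ ∑ g, a g * ((∑ k : Fin (L g), x ⟨g, k⟩ ^ 2) - s g ^ 2 / (L g : ℝ)) :=
        Finset.sum_nonneg (fun g _ => hnonneg g)
      have h2 : 0 < s ⬝ᵥ (S *ᵥ s) := by
        have := hSpd.dotProduct_mulVec_pos hs
        rwa [star_trivial] at this
      linarith

theorem main2 (G : ℕ) (L : Fin G → ℕ) (hL : ∀ g, 0 < L g)
    (a : Fin G → ℝ) (B : Matrix (Fin G) (Fin G) ℝ) (hB : B.IsSymm) :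
    (Matrix.diagonal (fun g => a g / (L g : ℝ)) + B).PosDef ↔
      (∀ μ : ℂ,
        (((Matrix.diagonal a + B * Matrix.diagonal (fun g => (L g : ℝ))).map
            (algebraMap ℝ ℂ)).charpoly.IsRoot μ) → 0 < μ.re ∧ μ.im = 0) := by
  classical
  set f := algebraMap ℝ ℂ with hf
  set S := Matrix.diagonal (fun g => a g / (L g : ℝ)) + B with hSdef
  set r : Fin G → ℝ := fun g => Real.sqrt (L g) with hrdef
  have hr : ∀ g, 0 < r g := fun g => Real.sqrt_pos.mpr (Nat.cast_pos.mpr (hL g))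
  set T := Matrix.diagonal r * S * Matrix.diagonal r with hT
  have hSherm : S.IsHermitian := Smat_isHermitian G L a B hB
  have hdiagH : ∀ d : Fin G → ℝ, (Matrix.diagonal d)ᴴ = Matrix.diagonal d := by
    intro d
    rw [Matrix.diagonal_conjTranspose]
    congr 1
  have hTherm : T.IsHermitian := by
    have h := Matrix.isHermitian_conjTranspose_mul_mul (A := S) (Matrix.diagonal r) hSherm
    rw [hdiagH r] at h
    rw [hT]
    exact h
  have hDrUnit : IsUnit (Matrix.diagonal r) := by
    rw [Matrix.isUnit_iff_isUnit_det, det_diagonal]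
    exact (Finset.prod_pos (fun g _ => hr g)).ne'.isUnit
  have hriUnit : IsUnit (Matrix.diagonal fun g => (r g)⁻¹) := by
    rw [Matrix.isUnit_iff_isUnit_det, det_diagonal]
    exact (Finset.prod_pos (fun g _ => inv_pos.mpr (hr g))).ne'.isUnit
  have h1 : Matrix.diagonal (fun g => (r g)⁻¹) * Matrix.diagonal r = 1 := by
    rw [diagonal_mul_diagonal]
    have e : (fun i => (r i)⁻¹ * r i) = fun _ : Fin G => (1:ℝ) :=
      funext fun g => inv_mul_cancel₀ (hr g).ne'
    rw [e, Matrix.diagonal_one]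
  have h2 : Matrix.diagonal r * Matrix.diagonal (fun g => (r g)⁻¹) = 1 := by
    rw [diagonal_mul_diagonal]
    have e : (fun i => r i * (r i)⁻¹) = fun _ : Fin G => (1:ℝ) :=
      funext fun g => mul_inv_cancel₀ (hr g).ne'
    rw [e, Matrix.diagonal_one]
  have hri_mul : Matrix.diagonal (fun g => (r g)⁻¹) * T * Matrix.diagonal (fun g => (r g)⁻¹)
      = S := by
    rw [hT]
    have e : Matrix.diagonal (fun g => (r g)⁻¹) * (Matrix.diagonal r * S * Matrix.diagonal r)
        * Matrix.diagonal (fun g => (r g)⁻¹)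
        = (Matrix.diagonal (fun g => (r g)⁻¹) * Matrix.diagonal r) * S
          * (Matrix.diagonal r * Matrix.diagonal (fun g => (r g)⁻¹)) := by
      simp only [Matrix.mul_assoc]
    rw [e, h1, h2, one_mul, mul_one]
  -- the unitary
  set U : Matrix (Fin G) (Fin G) ℝ := (hTherm.eigenvectorUnitary : Matrix (Fin G) (Fin G) ℝ)
    with hU
  have hUU : U * star U = 1 := Matrix.mem_unitaryGroup_iff.mp hTherm.eigenvectorUnitary.2
  have hstarUUnit : IsUnit (star U) := by
    rw [Matrix.isUnit_iff_isUnit_det]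
    have : U.det * (star U).det = 1 := by rw [← det_mul, hUU, det_one]
    exact IsUnit.of_mul_eq_one _ (by rw [mul_comm] at this; exact this)
  have eq1 : S.PosDef ↔ ∀ i, 0 < hTherm.eigenvalues i := by
    constructor
    · intro hS i
      have hTpd : T.PosDef := by
        have h := posDef_conj' (Matrix.diagonal r) hS hDrUnit
        rw [hdiagH r] at h
        rw [hT]
        exact h
      exact hTpd.eigenvalues_pos i
    · intro hpos
      have hDpd : (Matrix.diagonal (RCLike.ofReal ∘ hTherm.eigenvalues)
          : Matrix (Fin G) (Fin G) ℝ).PosDef :=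
        Matrix.PosDef.diagonal (fun i => by simpa using hpos i)
      have hTpd : T.PosDef := by
        have hcongr := posDef_conj' (star U) hDpd hstarUUnit
        rw [Matrix.star_eq_conjTranspose, conjTranspose_conjTranspose] at hcongr
        have := hTherm.spectral_theorem
        rw [Unitary.conjStarAlgAut_apply, ← hU] at this
        rw [this]
        exact hcongr
      have h := posDef_conj' (Matrix.diagonal fun g => (r g)⁻¹) hTpd hriUnit
      rw [hdiagH (fun g => (r g)⁻¹)] at h
      rw [← hri_mul]
      exact h
  -- root characterization
  have hΔ : Matrix.diagonal r * (Matrix.diagonal a + B * Matrix.diagonal (fun g => (L g : ℝ)))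
      = T * Matrix.diagonal r := by
    have hrr : Matrix.diagonal r * Matrix.diagonal r
        = Matrix.diagonal (fun g => (L g : ℝ)) := by
      rw [diagonal_mul_diagonal]
      have e : (fun i => r i * r i) = fun g : Fin G => (L g : ℝ) :=
        funext fun g => Real.mul_self_sqrt (Nat.cast_nonneg _)
      rw [e]
    have hSL : S * Matrix.diagonal (fun g => (L g : ℝ))
        = Matrix.diagonal a + B * Matrix.diagonal (fun g => (L g : ℝ)) := by
      rw [hSdef, add_mul, diagonal_mul_diagonal]
      have e : (fun i => a i / (L i : ℝ) * (L i : ℝ)) = a := funext fun g =>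
        div_mul_cancel₀ (a g) (Nat.cast_ne_zero.mpr (hL g).ne')
      rw [e]
    rw [← hSL, hT, ← hrr]
    simp only [Matrix.mul_assoc]
  have root_iff : ∀ μ : ℂ,
      (((Matrix.diagonal a + B * Matrix.diagonal (fun g => (L g : ℝ))).map f).charpoly.IsRoot μ)
        ↔ ∃ i, μ = (hTherm.eigenvalues i : ℂ) := by
    intro μ
    rw [Polynomial.IsRoot, eval_charpoly']
    have hΔℂ : (Matrix.diagonal r).map f
          * ((Matrix.diagonal a + B * Matrix.diagonal (fun g => (L g : ℝ))).map f)
        = (T.map f) * ((Matrix.diagonal r).map f) := by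
      rw [← Matrix.map_mul, ← Matrix.map_mul, hΔ]
    have hdetDr : ((Matrix.diagonal r).map f).det ≠ 0 := by
      rw [Matrix.diagonal_map (map_zero f), det_diagonal]
      refine Finset.prod_ne_zero_iff.mpr fun g _ => ?_
      simpa [hf] using (hr g).ne'
    have hcomm : ((Matrix.diagonal r).map f)
          * (Matrix.diagonal (fun _ : Fin G => μ)
            - (Matrix.diagonal a + B * Matrix.diagonal (fun g => (L g : ℝ))).map f)
        = (Matrix.diagonal (fun _ : Fin G => μ) - T.map f) * ((Matrix.diagonal r).map f) := by
      rw [Matrix.mul_sub, Matrix.sub_mul, hΔℂ]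
      congr 1
      rw [Matrix.diagonal_map (map_zero f), diagonal_mul_diagonal, diagonal_mul_diagonal]
      have e : (fun i => f (r i) * μ) = fun i : Fin G => μ * f (r i) :=
        funext fun g => mul_comm _ _
      rw [e]
    have hdet : (Matrix.diagonal (fun _ : Fin G => μ)
          - (Matrix.diagonal a + B * Matrix.diagonal (fun g => (L g : ℝ))).map f).det
        = (Matrix.diagonal (fun _ : Fin G => μ) - T.map f).det := by
      have hc := congrArg Matrix.det hcomm
      rw [det_mul, det_mul] at hc
      apply mul_left_cancel₀ hdetDr
      rw [hc]
      ring
    rw [hdet, hf, det_sub_eigen G T hTherm μ]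
    rw [Finset.prod_eq_zero_iff]
    constructor
    · rintro ⟨i, _, hi⟩
      exact ⟨i, by linear_combination hi⟩
    · rintro ⟨i, hi⟩
      exact ⟨i, Finset.mem_univ i, by rw [hi]; ring⟩
  rw [eq1]
  constructor
  · intro hpos μ hroot
    obtain ⟨i, rfl⟩ := (root_iff μ).mp hroot
    exact ⟨by simpa using hpos i, by simp⟩
  · intro hcond i
    have := hcond (hTherm.eigenvalues i : ℂ) ((root_iff _).mpr ⟨i, rfl⟩)
    simpa using this.1

/-- A uniform-block matrix `N(A,B,ℓ)` (with `A = diag(a_1,…,a_G)`, `B` symmetric,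
`L = diag(L_1,…,L_G)`) is positive definite if and only if `a_g > 0` for all `g` with
`L_g ≥ 2` and the `G × G` matrix `Δ = A + B L` has all eigenvalues positive (i.e. every
complex eigenvalue of `Δ` is a positive real number). -/

theorem UB_posDef_iff (G : ℕ) (L : Fin G → ℕ) (hL : ∀ g, 0 < L g)
    (a : Fin G → ℝ) (B : Matrix (Fin G) (Fin G) ℝ) (hB : B.IsSymm) :
    (UB G L a B).PosDef ↔
      (∀ g, 2 ≤ L g → 0 < a g) ∧
      (∀ μ : ℂ,
        (((Matrix.diagonal a + B * Matrix.diagonal (fun g => (L g : ℝ))).map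
            (algebraMap ℝ ℂ)).charpoly.IsRoot μ) → 0 < μ.re ∧ μ.im = 0) := by
  rw [main1 G L hL a B hB]
  exact and_congr Iff.rfl (main2 G L hL a B hB)
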